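/- For n ≥ 3, any one-form x and any b ∈ ⟦λ^{n−2,0}⟧: 𝓛(x ⊗ (b ∧ ω)) = (n−2)·Ix ⊗ (I₍₁₎b ∧ ω), where Ix(X) = −x(IX). Consequently 𝓛∘𝓛 = (n−2)²·id on the subspace V* ⊗ (⟦λ^{n−2,0}⟧ ∧ ω) of V* ⊗ ΛⁿV*. -/

import Mathlib

noncomputable section

open scoped RealInnerProductSpace
open Function

namespace SUnPaper

variable {V : Type*} [NormedAddCommGroup V] [InnerProductSpace ℝ V]

/-- Wedge product of real-valued alternating forms. -/
def wedge {p q : ℕ} (a : V [⋀^Fin p]→ₗ[ℝ] ℝ) (b : V [⋀^Fin q]→ₗ[ℝ] ℝ) :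
    V [⋀^Fin (p + q)]→ₗ[ℝ] ℝ :=
  (((TensorProduct.lid ℝ ℝ).toLinearMap).compAlternatingMap (a.domCoprod b)).domDomCongr
    finSumFinEquiv

/-- Wedge product of complex-valued (ℝ-multilinear) alternating forms. -/
def cwedge {p q : ℕ} (a : V [⋀^Fin p]→ₗ[ℝ] ℂ) (b : V [⋀^Fin q]→ₗ[ℝ] ℂ) :
    V [⋀^Fin (p + q)]→ₗ[ℝ] ℂ :=
  ((LinearMap.mul' ℝ ℂ).compAlternatingMap (a.domCoprod b)).domDomCongr finSumFinEquiv

/-- The one-form `⟪·, x⟫` associated to a vector `x` via the metric. -/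
def oneForm (x : V) : V [⋀^Fin 1]→ₗ[ℝ] ℝ :=
  AlternatingMap.ofSubsingleton ℝ V ℝ 0 ((innerₗ V).flip x)

/-- A complex-valued one-form from an `ℝ`-linear map into `ℂ`. -/
def cOneForm (f : V →ₗ[ℝ] ℂ) : V [⋀^Fin 1]→ₗ[ℝ] ℂ :=
  AlternatingMap.ofSubsingleton ℝ V ℂ 0 f

/-- The complex one-form `x + i·y`, i.e. `w ↦ ⟪w, x⟫ + i ⟪w, y⟫`. -/
def cplxPair (x y : V) : V →ₗ[ℝ] ℂ :=
  Complex.ofRealAm.toLinearMap ∘ₗ ((innerₗ V).flip x)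
    + Complex.I • (Complex.ofRealAm.toLinearMap ∘ₗ ((innerₗ V).flip y))

/-- Iterated wedge of complex one-forms. -/
def cprod : ∀ (k : ℕ), (Fin k → (V [⋀^Fin 1]→ₗ[ℝ] ℂ)) → V [⋀^Fin k]→ₗ[ℝ] ℂ
  | 0, _ => AlternatingMap.constOfIsEmpty ℝ V (Fin 0) 1
  | (k + 1), f => cwedge (cprod k (f ∘ Fin.castSucc)) (f (Fin.last k))

/-- The complex volume form `Ψ = e₁ℂ ∧ ⋯ ∧ eₙℂ` of the SU(n)-structure determined by
`I` and the adapted basis `e₁, …, eₙ, Ie₁, …, Ieₙ`. -/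
def Psi (n : ℕ) (J : V →ₗ[ℝ] V) (e : Fin n → V) : V [⋀^Fin n]→ₗ[ℝ] ℂ :=
  cprod n fun j => cOneForm (cplxPair (e j) (J (e j)))

/-- `ψ₊ = Re (e₁ℂ ∧ ⋯ ∧ eₙℂ)`. -/
def psiP (n : ℕ) (J : V →ₗ[ℝ] V) (e : Fin n → V) : V [⋀^Fin n]→ₗ[ℝ] ℝ :=
  Complex.reLm.compAlternatingMap (Psi n J e)

/-- `ψ₋ = Im (e₁ℂ ∧ ⋯ ∧ eₙℂ)`. -/
def psiM (n : ℕ) (J : V →ₗ[ℝ] V) (e : Fin n → V) : V [⋀^Fin n]→ₗ[ℝ] ℝ :=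
  Complex.imLm.compAlternatingMap (Psi n J e)

/-- Interior product `x ⌟ b` of a `p`-form by a vector. -/
def ic : ∀ {p : ℕ}, V → (V [⋀^Fin p]→ₗ[ℝ] ℝ) → V [⋀^Fin (p - 1)]→ₗ[ℝ] ℝ
  | 0, _, _ => 0
  | (_ + 1), x, a => a.curryLeft x

/-- `k`-th power `ω^k = ω ∧ ⋯ ∧ ω`. -/
def wpow (ω : V [⋀^Fin 2]→ₗ[ℝ] ℝ) : ∀ k : ℕ, V [⋀^Fin (2 * k)]→ₗ[ℝ] ℝ
  | 0 => AlternatingMap.constOfIsEmpty ℝ V (Fin 0) 1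
  | (k + 1) => wedge (wpow ω k) ω

/-- Inner product of `p`-forms: `⟨a,c⟩ = (1/p!) Σ a(f_{i₁},…) c(f_{i₁},…)`. -/
def formInner {ι : Type*} [Fintype ι] (B : ι → V) {p : ℕ}
    (a c : V [⋀^Fin p]→ₗ[ℝ] ℝ) : ℝ :=
  (p.factorial : ℝ)⁻¹ * ∑ f : Fin p → ι, a (fun i => B (f i)) * c (fun i => B (f i))

/-- The space `⟦λ^{p,0}⟧`: real `p`-forms with `I₍ᵢ₎I₍ⱼ₎ b = -b` for all `i < j`. -/
def IsLam (J : V →ₗ[ℝ] V) {p : ℕ} (a : V [⋀^Fin p]→ₗ[ℝ] ℝ) : Prop :=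
  ∀ (v : Fin p → V) (i j : Fin p), i < j →
    a (Function.update (Function.update v i (J (v i))) j (J (v j))) = - a v


/-- The pure tensor x ⊗ c ∈ V* ⊗ ΛⁿV*, viewed as an (0, n+1)-tensor. -/
def tens (n : ℕ) (μ : V [⋀^Fin 1]→ₗ[ℝ] ℝ) (c : V [⋀^Fin n]→ₗ[ℝ] ℝ) :
    (Fin (n + 1) → V) → ℝ :=
  fun v => μ ![v 0] * c (fun j : Fin n => v j.succ)

/-- The operator 𝓛 = I₍₁₎(I₍₂₎ + ⋯ + I₍ₙ₊₁₎) on (0, n+1)-tensors. -/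
def Lop (n : ℕ) (J : V →ₗ[ℝ] V) (F : (Fin (n + 1) → V) → ℝ) :
    (Fin (n + 1) → V) → ℝ :=
  fun v => ∑ j : Fin n,
    F (Function.update (Function.update v 0 (J (v 0))) j.succ (J (v j.succ)))

section Aux

variable (J : V →ₗ[ℝ] V)

/-- multilinear version of the derivation extension of `J` to forms -/
def SAm {ι : Type*} [Fintype ι] [DecidableEq ι]
    (m : MultilinearMap ℝ (fun _ : ι => V) ℝ) : MultilinearMap ℝ (fun _ : ι => V) ℝ :=
  ∑ i : ι, m.compLinearMap (fun k => if k = i then J else LinearMap.id)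

theorem SAm_apply {ι : Type*} [Fintype ι] [DecidableEq ι]
    (m : MultilinearMap ℝ (fun _ : ι => V) ℝ) (v : ι → V) :
    SAm J m v = ∑ i : ι, m (Function.update v i (J (v i))) := by
  rw [SAm, MultilinearMap.sum_apply]
  refine Finset.sum_congr rfl fun i _ => ?_
  rw [MultilinearMap.compLinearMap_apply]
  congr 1
  funext k
  rcases eq_or_ne k i with rfl | h
  · simp
  · simp [h, Function.update_of_ne h]

/-- The derivation extension of `J` acting on alternating forms:
`(SA J a)(v) = ∑ i, a(v₁, …, J vᵢ, …)`. -/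
def SA {ι : Type*} [Fintype ι] [DecidableEq ι] (a : V [⋀^ι]→ₗ[ℝ] ℝ) :
    V [⋀^ι]→ₗ[ℝ] ℝ :=
  { SAm J a.toMultilinearMap with
    map_eq_zero_of_eq' := by
      intro v i j hv hij
      have happ : ∀ w, (SAm J a.toMultilinearMap).toFun w
          = ∑ k : ι, a (Function.update w k (J (w k))) := fun w => SAm_apply J _ w
      rw [happ]
      have hswap : Function.update v j (J (v j))
          = (Function.update v i (J (v i))) ∘ Equiv.swap i j := by
        funext l
        rcases eq_or_ne l i with rfl | hli
        · rw [Function.comp_apply, Function.update_of_ne hij, Equiv.swap_apply_left,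
            Function.update_of_ne hij.symm, hv]
        rcases eq_or_ne l j with rfl | hlj
        · rw [Function.comp_apply, Equiv.swap_apply_right, Function.update_self,
            Function.update_self, hv]
        · rw [Function.comp_apply, Equiv.swap_apply_of_ne_of_ne hli hlj,
            Function.update_of_ne hlj, Function.update_of_ne hli]
      have hzero : ∀ k, k ≠ i → k ≠ j →
          a (Function.update v k (J (v k))) = 0 := by
        intro k hki hkj
        exact a.map_eq_zero_of_eq _
          (by rw [Function.update_of_ne hki.symm, Function.update_of_ne hkj.symm]; exact hv) hij
      refine Finset.sum_ninvolution (⇑(Equiv.swap i j)) ?_ ?_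
        (fun k => Finset.mem_univ _) (fun k => Equiv.swap_apply_self i j k)
      · intro k
        rcases eq_or_ne k i with rfl | hki
        · rw [Equiv.swap_apply_left, hswap, a.map_swap _ hij, add_neg_cancel]
        rcases eq_or_ne k j with rfl | hkj
        · rw [Equiv.swap_apply_right, hswap, a.map_swap _ hij, neg_add_cancel]
        · rw [Equiv.swap_apply_of_ne_of_ne hki hkj, hzero k hki hkj, add_zero]
      · intro k hk
        rcases eq_or_ne k i with rfl | hki
        · rw [Equiv.swap_apply_left]; exact hij.symm
        rcases eq_or_ne k j with rfl | hkj
        · rw [Equiv.swap_apply_right]; exact hij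
        · exact absurd (hzero k hki hkj) hk }

theorem SA_apply {ι : Type*} [Fintype ι] [DecidableEq ι] (a : V [⋀^ι]→ₗ[ℝ] ℝ)
    (v : ι → V) : SA J a v = ∑ i : ι, a (Function.update v i (J (v i))) :=
  SAm_apply J a.toMultilinearMap v

theorem sum_update_domCoprod {ιa ιb : Type*} [Fintype ιa] [Fintype ιb]
    [DecidableEq ιa] [DecidableEq ιb]
    (a : V [⋀^ιa]→ₗ[ℝ] ℝ) (b : V [⋀^ιb]→ₗ[ℝ] ℝ) (u : ιa ⊕ ιb → V) :
    ∑ i : ιa ⊕ ιb, (a.domCoprod b) (Function.update u i (J (u i))) =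
      ((SA J a).domCoprod b) u + (a.domCoprod (SA J b)) u := by
  have hsummand : ∀ σq : Equiv.Perm.ModSumCongr ιa ιb,
      ∑ i : ιa ⊕ ιb,
        AlternatingMap.domCoprod.summand a b σq (Function.update u i (J (u i))) =
      AlternatingMap.domCoprod.summand (SA J a) b σq u +
        AlternatingMap.domCoprod.summand a (SA J b) σq u := by
    intro σq
    induction σq using Quotient.inductionOn' with
    | h σ =>
      rw [AlternatingMap.domCoprod.summand_mk'', AlternatingMap.domCoprod.summand_mk'',
        AlternatingMap.domCoprod.summand_mk'']
      simp only [MultilinearMap.smul_apply, MultilinearMap.domDomCongr_apply,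
        MultilinearMap.domCoprod_apply, AlternatingMap.coe_multilinearMap]
      rw [← Equiv.sum_comp σ (fun i =>
        Equiv.Perm.sign σ •
          (a (fun k => (Function.update u i (J (u i))) (σ (Sum.inl k))) ⊗ₜ[ℝ]
           b (fun k => (Function.update u i (J (u i))) (σ (Sum.inr k)))))]
      rw [Fintype.sum_sum_type]
      have hinl : ∀ k₀ : ιa,
          (a (fun k => (Function.update u (σ (Sum.inl k₀)) (J (u (σ (Sum.inl k₀))))) (σ (Sum.inl k))) ⊗ₜ[ℝ]
           b (fun k => (Function.update u (σ (Sum.inl k₀)) (J (u (σ (Sum.inl k₀))))) (σ (Sum.inr k))))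
          = (a (Function.update (fun k => u (σ (Sum.inl k))) k₀ (J (u (σ (Sum.inl k₀))))) ⊗ₜ[ℝ]
             b (fun k => u (σ (Sum.inr k)))) := by
        intro k₀
        have h1 : (fun k => (Function.update u (σ (Sum.inl k₀)) (J (u (σ (Sum.inl k₀))))) (σ (Sum.inl k)))
            = Function.update (fun k => u (σ (Sum.inl k))) k₀ (J (u (σ (Sum.inl k₀)))) := by
          funext k
          rcases eq_or_ne k k₀ with rfl | hk
          · rw [Function.update_self, Function.update_self]
          · rw [Function.update_of_ne (fun h => hk (Sum.inl_injective (σ.injective h))),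
              Function.update_of_ne hk]
        have h2 : (fun k => (Function.update u (σ (Sum.inl k₀)) (J (u (σ (Sum.inl k₀))))) (σ (Sum.inr k)))
            = (fun k => u (σ (Sum.inr k))) := by
          funext k
          rw [Function.update_of_ne (fun h => Sum.inl_ne_inr ((σ.injective h).symm))]
        rw [h1, h2]
      have hinr : ∀ k₀ : ιb,
          (a (fun k => (Function.update u (σ (Sum.inr k₀)) (J (u (σ (Sum.inr k₀))))) (σ (Sum.inl k))) ⊗ₜ[ℝ]
           b (fun k => (Function.update u (σ (Sum.inr k₀)) (J (u (σ (Sum.inr k₀))))) (σ (Sum.inr k))))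
          = (a (fun k => u (σ (Sum.inl k))) ⊗ₜ[ℝ]
             b (Function.update (fun k => u (σ (Sum.inr k))) k₀ (J (u (σ (Sum.inr k₀)))))) := by
        intro k₀
        have h1 : (fun k => (Function.update u (σ (Sum.inr k₀)) (J (u (σ (Sum.inr k₀))))) (σ (Sum.inl k)))
            = (fun k => u (σ (Sum.inl k))) := by
          funext k
          rw [Function.update_of_ne (fun h => Sum.inl_ne_inr (σ.injective h))]
        have h2 : (fun k => (Function.update u (σ (Sum.inr k₀)) (J (u (σ (Sum.inr k₀))))) (σ (Sum.inr k)))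
            = Function.update (fun k => u (σ (Sum.inr k))) k₀ (J (u (σ (Sum.inr k₀)))) := by
          funext k
          rcases eq_or_ne k k₀ with rfl | hk
          · rw [Function.update_self, Function.update_self]
          · rw [Function.update_of_ne (fun h => hk (Sum.inr_injective (σ.injective h))),
              Function.update_of_ne hk]
        rw [h1, h2]
      rw [Finset.sum_congr rfl (fun k₀ _ => congrArg (Equiv.Perm.sign σ • ·) (hinl k₀)),
        Finset.sum_congr rfl (fun k₀ _ => congrArg (Equiv.Perm.sign σ • ·) (hinr k₀))]
      rw [← Finset.smul_sum, ← Finset.smul_sum, ← TensorProduct.sum_tmul,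
        ← TensorProduct.tmul_sum]
      rw [SA_apply, SA_apply]
  calc ∑ i : ιa ⊕ ιb, (a.domCoprod b) (Function.update u i (J (u i)))
      = ∑ i : ιa ⊕ ιb, ∑ σq : Equiv.Perm.ModSumCongr ιa ιb,
          AlternatingMap.domCoprod.summand a b σq (Function.update u i (J (u i))) := by
        refine Finset.sum_congr rfl fun i _ => ?_
        rw [AlternatingMap.domCoprod_apply, MultilinearMap.sum_apply]
    _ = ∑ σq : Equiv.Perm.ModSumCongr ιa ιb, ∑ i : ιa ⊕ ιb,
          AlternatingMap.domCoprod.summand a b σq (Function.update u i (J (u i))) :=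
        Finset.sum_comm
    _ = ∑ σq : Equiv.Perm.ModSumCongr ιa ιb,
          (AlternatingMap.domCoprod.summand (SA J a) b σq u +
            AlternatingMap.domCoprod.summand a (SA J b) σq u) :=
        Finset.sum_congr rfl fun σq _ => hsummand σq
    _ = ((SA J a).domCoprod b) u + (a.domCoprod (SA J b)) u := by
        rw [Finset.sum_add_distrib, AlternatingMap.domCoprod_apply,
          AlternatingMap.domCoprod_apply, MultilinearMap.sum_apply, MultilinearMap.sum_apply]

theorem wedge_apply {p q : ℕ} (a : V [⋀^Fin p]→ₗ[ℝ] ℝ) (b : V [⋀^Fin q]→ₗ[ℝ] ℝ)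
    (v : Fin (p + q) → V) :
    wedge a b v
      = (TensorProduct.lid ℝ ℝ).toLinearMap ((a.domCoprod b) (fun i => v (finSumFinEquiv i))) := rfl

theorem SA_wedge {p q : ℕ} (a : V [⋀^Fin p]→ₗ[ℝ] ℝ) (b : V [⋀^Fin q]→ₗ[ℝ] ℝ) :
    SA J (wedge a b) = wedge (SA J a) b + wedge a (SA J b) := by
  ext w
  rw [AlternatingMap.add_apply, SA_apply]
  have hreix : ∀ (i₀ : Fin p ⊕ Fin q),
      (fun i => (Function.update w (finSumFinEquiv i₀) (J (w (finSumFinEquiv i₀)))) (finSumFinEquiv i))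
        = Function.update (fun i => w (finSumFinEquiv i)) i₀
            (J ((fun i => w (finSumFinEquiv i)) i₀)) := by
    intro i₀
    funext k
    rcases eq_or_ne k i₀ with rfl | hk
    · rw [Function.update_self, Function.update_self]
    · rw [Function.update_of_ne (fun h => hk (finSumFinEquiv.injective h)),
        Function.update_of_ne hk]
  calc ∑ j : Fin (p + q), wedge a b (Function.update w j (J (w j)))
      = ∑ i₀ : Fin p ⊕ Fin q,
          wedge a b (Function.update w (finSumFinEquiv i₀) (J (w (finSumFinEquiv i₀)))) :=
        (Equiv.sum_comp finSumFinEquiv _).symm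
    _ = (TensorProduct.lid ℝ ℝ).toLinearMap (∑ i₀ : Fin p ⊕ Fin q,
          (a.domCoprod b) (Function.update (fun i => w (finSumFinEquiv i)) i₀
            (J ((fun i => w (finSumFinEquiv i)) i₀)))) := by
        rw [map_sum]
        exact Finset.sum_congr rfl fun i₀ _ => by rw [wedge_apply, hreix i₀]
    _ = wedge (SA J a) b w + wedge a (SA J b) w := by
        rw [sum_update_domCoprod, map_add, wedge_apply, wedge_apply]

theorem wedge_smul_left {p q : ℕ} (r : ℝ) (a : V [⋀^Fin p]→ₗ[ℝ] ℝ)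
    (b : V [⋀^Fin q]→ₗ[ℝ] ℝ) : wedge (r • a) b = r • wedge a b := by
  have h : (r • a).domCoprod b = r • (a.domCoprod b) := by
    rw [← AlternatingMap.domCoprod'_apply, ← AlternatingMap.domCoprod'_apply,
      ← TensorProduct.smul_tmul', map_smul]
  ext w
  rw [AlternatingMap.smul_apply, wedge_apply, wedge_apply, h, AlternatingMap.smul_apply,
    map_smul]

theorem wedge_zero_right {p q : ℕ} (a : V [⋀^Fin p]→ₗ[ℝ] ℝ) :
    wedge a (0 : V [⋀^Fin q]→ₗ[ℝ] ℝ) = 0 := by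
  have h : a.domCoprod (0 : V [⋀^Fin q]→ₗ[ℝ] ℝ) = 0 := by
    rw [← AlternatingMap.domCoprod'_apply, TensorProduct.tmul_zero, map_zero]
  ext w
  rw [wedge_apply, h, AlternatingMap.zero_apply, map_zero, AlternatingMap.zero_apply]

theorem SA_domDomCongr {ι κ : Type*} [Fintype ι] [Fintype κ] [DecidableEq ι]
    [DecidableEq κ] (e : ι ≃ κ) (a : V [⋀^ι]→ₗ[ℝ] ℝ) :
    SA J (a.domDomCongr e) = (SA J a).domDomCongr e := by
  ext w
  rw [SA_apply, AlternatingMap.domDomCongr_apply, SA_apply]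
  calc ∑ j : κ, (a.domDomCongr e) (Function.update w j (J (w j)))
      = ∑ i : ι, (a.domDomCongr e) (Function.update w (e i) (J (w (e i)))) :=
        (Equiv.sum_comp e _).symm
    _ = ∑ i : ι, a (Function.update (w ∘ e) i (J ((w ∘ e) i))) := by
        refine Finset.sum_congr rfl fun i _ => ?_
        rw [AlternatingMap.domDomCongr_apply]
        congr 1
        funext k
        rcases eq_or_ne k i with rfl | hk
        · rw [Function.comp_apply, Function.update_self, Function.update_self,
            Function.comp_apply]
        · rw [Function.comp_apply, Function.update_of_ne (fun h => hk (e.injective h)),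
            Function.update_of_ne hk, Function.comp_apply]

end Aux

/-- for n ≥ 3, 𝓛(x ⊗ (b ∧ ω)) = (n−2)·Ix ⊗ (I₍₁₎b ∧ ω) for
b ∈ ⟦λ^{n−2,0}⟧, and consequently 𝓛∘𝓛 = (n−2)²·id on V* ⊗ (⟦λ^{n−2,0}⟧ ∧ ω). -/
theorem Lop_on_tensors
{V : Type*} [NormedAddCommGroup V] [InnerProductSpace ℝ V]
    [FiniteDimensional ℝ V] (n : ℕ) (hdim : Module.finrank ℝ V = 2 * n)
    (J : V →ₗ[ℝ] V) (hJ : ∀ v : V, J (J v) = -v)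
    (hJorth : ∀ v w : V, ⟪J v, J w⟫ = ⟪v, w⟫)
    (bas : OrthonormalBasis (Fin n ⊕ Fin n) ℝ V)
    (hbas : ∀ j : Fin n, bas (Sum.inr j) = J (bas (Sum.inl j)))
    (ω : V [⋀^Fin 2]→ₗ[ℝ] ℝ) (hω : ∀ x y : V, ω ![x, y] = ⟪x, J y⟫)
    (ψp ψm : V [⋀^Fin n]→ₗ[ℝ] ℝ)
    (hψp : ψp = psiP n J (fun j => bas (Sum.inl j)))
    (hψm : ψm = psiM n J (fun j => bas (Sum.inl j)))
    (hn : 3 ≤ n) :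
    (∀ (μ : V [⋀^Fin 1]→ₗ[ℝ] ℝ) (b c : V [⋀^Fin (n - 2)]→ₗ[ℝ] ℝ),
      IsLam J b →
      (∀ v : Fin (n - 2) → V,
        c v = - b (Function.update v ⟨0, by omega⟩ (J (v ⟨0, by omega⟩)))) →
      Lop n J (tens n μ ((wedge b ω).domDomCongr (finCongr (by omega : n - 2 + 2 = n))))
        = fun v => ((n : ℝ) - 2) *
            tens n (-(μ.compLinearMap J))
              ((wedge c ω).domDomCongr (finCongr (by omega : n - 2 + 2 = n))) v)
      ∧ (∀ F : (Fin (n + 1) → V) → ℝ,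
        F ∈ Submodule.span ℝ
          {G | ∃ (μ : V [⋀^Fin 1]→ₗ[ℝ] ℝ) (b : V [⋀^Fin (n - 2)]→ₗ[ℝ] ℝ),
            IsLam J b ∧
            G = tens n μ ((wedge b ω).domDomCongr (finCongr (by omega : n - 2 + 2 = n)))} →
        Lop n J (Lop n J F) = ((n : ℝ) - 2) ^ 2 • F) := by
  classical
  have hp2 : n - 2 + 2 = n := by omega
  have hzlt : 0 < n - 2 := by omega
  have hpne : ((n - 2 : ℕ) : ℝ) ≠ 0 := Nat.cast_ne_zero.mpr (by omega)
  have hcast : ((n - 2 : ℕ) : ℝ) = (n : ℝ) - 2 := by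
    have := Nat.cast_sub (R := ℝ) (show 2 ≤ n by omega)
    simpa using this
  set z : Fin (n - 2) := ⟨0, hzlt⟩ with hzdef
  -- ω as a function of two arguments
  have hωfun : ∀ u : Fin 2 → V, ω u = ⟪u 0, J (u 1)⟫ := by
    intro u
    have hu : u = ![u 0, u 1] := by
      funext i; fin_cases i <;> rfl
    have h2 := hω (u 0) (u 1)
    rw [← hu] at h2
    exact h2
  -- the derivation extension kills ω
  have hSAω : SA J ω = 0 := by
    ext u
    rw [SA_apply, AlternatingMap.zero_apply, Fin.sum_univ_two, hωfun, hωfun]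
    have e10 : (1 : Fin 2) ≠ 0 := by decide
    rw [Function.update_self, Function.update_of_ne e10, Function.update_self,
      Function.update_of_ne e10.symm, hJorth, hJ, inner_neg_right, add_neg_cancel]
  -- all terms in `SA` agree for forms in ⟦λ^{p,0}⟧
  have key : ∀ (b : V [⋀^Fin (n - 2)]→ₗ[ℝ] ℝ), IsLam J b →
      ∀ (u : Fin (n - 2) → V) (i : Fin (n - 2)),
        b (Function.update u i (J (u i))) = b (Function.update u z (J (u z))) := by
    intro b hb u i
    rcases eq_or_ne i z with rfl | hi
    · rfl
    have hzi : z < i := by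
      have : (0 : ℕ) < i.val := Nat.pos_of_ne_zero (fun h => hi (Fin.ext h))
      exact this
    have h1 := hb (Function.update u z (J (u z))) z i hzi
    rw [Function.update_self, Function.update_of_ne hi] at h1
    rw [Function.update_idem, hJ] at h1
    rw [Function.update_comm (ne_of_lt hzi), AlternatingMap.map_update_neg,
      Function.update_comm (ne_of_gt hzi), Function.update_eq_self] at h1
    exact neg_injective h1
  -- pointwise formula for `SA` on ⟦λ^{p,0}⟧ forms
  have hSAb : ∀ (b : V [⋀^Fin (n - 2)]→ₗ[ℝ] ℝ), IsLam J b → ∀ u,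
      SA J b u = ((n - 2 : ℕ) : ℝ) * b (Function.update u z (J (u z))) := by
    intro b hb u
    rw [SA_apply, Finset.sum_congr rfl (fun i _ => key b hb u i), Finset.sum_const,
      Finset.card_univ, Fintype.card_fin, nsmul_eq_mul]
  -- Part 1
  have H1 : ∀ (μ : V [⋀^Fin 1]→ₗ[ℝ] ℝ) (b c : V [⋀^Fin (n - 2)]→ₗ[ℝ] ℝ),
      IsLam J b →
      (∀ v : Fin (n - 2) → V,
        c v = - b (Function.update v ⟨0, by omega⟩ (J (v ⟨0, by omega⟩)))) →
      Lop n J (tens n μ ((wedge b ω).domDomCongr (finCongr (by omega : n - 2 + 2 = n))))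
        = fun v => ((n : ℝ) - 2) *
            tens n (-(μ.compLinearMap J))
              ((wedge c ω).domDomCongr (finCongr (by omega : n - 2 + 2 = n))) v := by
    intro μ b c hb hc
    have hSAbc : SA J b = (-(((n - 2 : ℕ) : ℝ))) • c := by
      ext u
      rw [AlternatingMap.smul_apply, hSAb b hb u, hc u, smul_eq_mul]
      ring
    have hSAwedge : SA J (wedge b ω) = (-(((n - 2 : ℕ) : ℝ))) • wedge c ω := by
      rw [SA_wedge, hSAω, wedge_zero_right, add_zero, hSAbc, wedge_smul_left]
    funext v
    simp only [Lop, tens]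
    have hx0 : ∀ j : Fin n,
        (Function.update (Function.update v 0 (J (v 0))) j.succ (J (v j.succ))) 0
          = J (v 0) := by
      intro j
      rw [Function.update_of_ne (Fin.succ_ne_zero j).symm, Function.update_self]
    have hsucc : ∀ j : Fin n,
        (fun k : Fin n =>
          (Function.update (Function.update v 0 (J (v 0))) j.succ (J (v j.succ))) k.succ)
          = Function.update (fun k : Fin n => v k.succ) j (J (v j.succ)) := by
      intro j
      funext k
      rcases eq_or_ne k j with rfl | hk
      · rw [Function.update_self, Function.update_self]
      · rw [Function.update_of_ne (fun h => hk (Fin.succ_injective _ h)),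
          Function.update_of_ne (Fin.succ_ne_zero k), Function.update_of_ne hk]
    have hμ1 : ∀ j : Fin n,
        ![(Function.update (Function.update v 0 (J (v 0))) j.succ (J (v j.succ))) 0]
          = ![J (v 0)] := by
      intro j; rw [hx0 j]
    calc ∑ j : Fin n,
        μ ![(Function.update (Function.update v 0 (J (v 0))) j.succ (J (v j.succ))) 0] *
          ((wedge b ω).domDomCongr (finCongr hp2))
            (fun k : Fin n =>
              (Function.update (Function.update v 0 (J (v 0))) j.succ (J (v j.succ))) k.succ)
        = ∑ j : Fin n, μ ![J (v 0)] *
            ((wedge b ω).domDomCongr (finCongr hp2))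
              (Function.update (fun k : Fin n => v k.succ) j
                (J ((fun k : Fin n => v k.succ) j))) := by
          refine Finset.sum_congr rfl fun j _ => ?_
          rw [hμ1 j, hsucc j]
      _ = μ ![J (v 0)] * SA J ((wedge b ω).domDomCongr (finCongr hp2))
            (fun k : Fin n => v k.succ) := by
          rw [SA_apply, Finset.mul_sum]
      _ = ((n : ℝ) - 2) *
            ((-(μ.compLinearMap J)) ![v 0] *
              ((wedge c ω).domDomCongr (finCongr hp2)) (fun k : Fin n => v k.succ)) := by
          rw [SA_domDomCongr, hSAwedge]
          rw [AlternatingMap.domDomCongr_apply, AlternatingMap.smul_apply]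
          rw [AlternatingMap.neg_apply, AlternatingMap.compLinearMap_apply]
          have hv1 : (fun i : Fin 1 => J ((![v 0]) i)) = ![J (v 0)] := by
            funext i
            have : i = 0 := Subsingleton.elim i 0
            subst this; rfl
          rw [hv1, ← AlternatingMap.domDomCongr_apply, smul_eq_mul, hcast]
          ring
  refine ⟨H1, ?_⟩
  -- Part 2
  have hLop_add : ∀ F G : (Fin (n + 1) → V) → ℝ,
      Lop n J (F + G) = Lop n J F + Lop n J G := by
    intro F G; funext v
    simp [Lop, Finset.sum_add_distrib]
  have hLop_smul : ∀ (r : ℝ) (F : (Fin (n + 1) → V) → ℝ),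
      Lop n J (r • F) = r • Lop n J F := by
    intro r F; funext v
    simp [Lop, Finset.mul_sum]
  have hLop_zero : Lop n J (0 : (Fin (n + 1) → V) → ℝ) = 0 := by
    funext v; simp [Lop]
  intro F hF
  refine Submodule.span_induction
    (p := fun G _ => Lop n J (Lop n J G) = ((n : ℝ) - 2) ^ 2 • G) ?_ ?_ ?_ ?_ hF
  · rintro G ⟨μ, b, hb, rfl⟩
    -- construct c = I₁ b
    set c : V [⋀^Fin (n - 2)]→ₗ[ℝ] ℝ := (-(((n - 2 : ℕ) : ℝ))⁻¹) • SA J b with hcdef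
    have hc : ∀ v : Fin (n - 2) → V,
        c v = - b (Function.update v z (J (v z))) := by
      intro v
      rw [hcdef, AlternatingMap.smul_apply, hSAb b hb v, smul_eq_mul, ← mul_assoc,
        neg_mul, inv_mul_cancel₀ hpne]
      ring
    have hcLam : IsLam J c := by
      intro v i j hij
      rw [hc, hc]
      rcases eq_or_ne i z with rfl | hiz
      · -- i = z
        have hjz : j ≠ z := ne_of_gt hij
        have hwz : (Function.update (Function.update v z (J (v z))) j (J (v j))) z
            = J (v z) := by
          rw [Function.update_of_ne hjz.symm, Function.update_self]
        rw [hwz, hJ, Function.update_comm hjz, Function.update_idem,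
          Function.update_comm hjz.symm, AlternatingMap.map_update_neg,
          Function.update_comm hjz, Function.update_eq_self, key b hb v j]
      · -- i ≠ z
        have hjz : j ≠ z := by
          intro h
          subst h
          exact (Nat.not_lt_zero _ (show (i : ℕ) < (0 : ℕ) from hij)).elim
        have hwz : (Function.update (Function.update v i (J (v i))) j (J (v j))) z
            = v z := by
          rw [Function.update_of_ne hjz.symm, Function.update_of_ne hiz.symm]
        rw [hwz]
        have harg : Function.update
              (Function.update (Function.update v i (J (v i))) j (J (v j))) z (J (v z))
            = Function.update
              (Function.update (Function.update v z (J (v z))) i (J (v i))) j (J (v j)) := by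
          rw [Function.update_comm (show j ≠ z from hjz), Function.update_comm
            (show i ≠ z from hiz)]
        rw [harg]
        have h2 := hb (Function.update v z (J (v z))) i j hij
        rw [Function.update_of_ne hiz, Function.update_of_ne hjz] at h2
        rw [h2, neg_neg]
    have hc' : ∀ v : Fin (n - 2) → V,
        (-b) v = - c (Function.update v z (J (v z))) := by
      intro v
      rw [AlternatingMap.neg_apply, hc, Function.update_self, Function.update_idem, hJ,
        AlternatingMap.map_update_neg, Function.update_eq_self, neg_neg]
    have e1 := H1 μ b c hb hc
    have e2 := H1 (-(μ.compLinearMap J)) c (-b) hcLam hc'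
    have hfun1 : (fun v => ((n : ℝ) - 2) *
          tens n (-(μ.compLinearMap J))
            ((wedge c ω).domDomCongr (finCongr hp2)) v)
        = ((n : ℝ) - 2) • tens n (-(μ.compLinearMap J))
            ((wedge c ω).domDomCongr (finCongr hp2)) := by
      funext v; simp
    rw [e1, hfun1, hLop_smul, e2]
    funext v
    have hμ2 : (-((-(μ.compLinearMap J)).compLinearMap J)) ![v 0] = -(μ ![v 0]) := by
      rw [AlternatingMap.neg_apply, AlternatingMap.compLinearMap_apply,
        AlternatingMap.neg_apply, AlternatingMap.compLinearMap_apply, neg_neg]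
      have hv2 : (fun i : Fin 1 => J (J ((![v 0]) i)))
          = Function.update ![v 0] 0 (-(v 0)) := by
        funext i
        have : i = 0 := Subsingleton.elim i 0
        subst this
        rw [Function.update_self]
        exact hJ (v 0)
      rw [hv2]
      have := AlternatingMap.map_update_neg μ ![v 0] 0 (v 0)
      rw [this]
      congr 1
      exact congrArg μ (Function.update_eq_self 0 ![v 0])
    have hwneg : wedge (-b) ω = -(wedge b ω) := by
      rw [← neg_one_smul ℝ b, wedge_smul_left]
      ext w
      simp
    have htens : tens n (-((-(μ.compLinearMap J)).compLinearMap J))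
          ((wedge (-b) ω).domDomCongr (finCongr hp2)) v
        = tens n μ ((wedge b ω).domDomCongr (finCongr hp2)) v := by
      simp only [tens]
      rw [hμ2, hwneg]
      rw [AlternatingMap.domDomCongr_apply, AlternatingMap.neg_apply,
        ← AlternatingMap.domDomCongr_apply]
      ring
    simp only [Pi.smul_apply, smul_eq_mul]
    rw [htens]
    ring
  · simp only [hLop_zero, smul_zero]
  · intro x y _ _ hx hy
    simp only [hLop_add, hx, hy, smul_add]
  · intro r x _ hx
    simp only [hLop_smul, hx]
    rw [smul_comm]


end SUnPaper
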